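/- arXiv:2409.05631 — 6 statements merged into one kernel-verified Lean document; each statement's English description precedes it below -/
import Mathlib

section
/- Let x satisfy Q(α) ≤ x < Q(γ). Then ∫_{-∞}^{x} J(F(y)) dy = (1/(γ−α))·( F(x)·x − ∫_{α}^{F(x)} Q(u) du − α·x ). -/
open MeasureTheory intervalIntegral

theorem smoothly_trimmed_E1
    (α γ : ℝ) (hα : 0 < α) (hαγ : α < γ) (hγ : γ ≤ 1/2)
    (J F Q : ℝ → ℝ)
    (hJ : ∀ u : ℝ, J u =
      if α ≤ u ∧ u < γ then (u - α) / (γ - α)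
      else if γ ≤ u ∧ u ≤ 1 - γ then 1
      else if 1 - γ < u ∧ u ≤ 1 - α then (1 - u - α) / (γ - α)
      else 0)
    (hFcont : Continuous F) (hFmono : StrictMono F)
    (hFQ : ∀ p ∈ Set.Ioo (0:ℝ) 1, F (Q p) = p)
    (hQF : ∀ x : ℝ, Q (F x) = x)
    (x : ℝ) (hx1 : Q α ≤ x) (hx2 : x < Q γ) :
    ∫ y in Set.Iic x, J (F y) =
      (1 / (γ - α)) * (F x * x - (∫ u in α..(F x), Q u) - α * x) := by
  have hγ1 : γ < 1 := by linarith
  have hFQα : F (Q α) = α := hFQ α ⟨hα, by linarith⟩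
  have hFQγ : F (Q γ) = γ := hFQ γ ⟨by linarith, hγ1⟩
  set t := F x with ht
  have hαt : α ≤ t := hFQα ▸ hFmono.monotone hx1
  have htγ : t < γ := by have := hFmono hx2; rwa [hFQγ] at this
  have hFQ' : ∀ u ∈ Set.Icc α t, F (Q u) = u := fun u hu =>
    hFQ u ⟨lt_of_lt_of_le hα hu.1, lt_of_le_of_lt hu.2 (htγ.trans hγ1)⟩
  have hQlt : ∀ u ∈ Set.Icc α t, ∀ v ∈ Set.Icc α t, u < v → Q u < Q v := by
    intro u hu v hv huv
    have h := hFmono.lt_iff_lt (a := Q u) (b := Q v)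
    rw [hFQ' u hu, hFQ' v hv] at h
    exact h.mp huv
  have hQmono : MonotoneOn Q (Set.Icc α t) := by
    intro u hu v hv huv
    rcases huv.eq_or_lt with rfl | h
    · exact le_rfl
    · exact (hQlt u hu v hv h).le
  have hQt : Q t = x := hQF x
  set Q' : ℝ → ℝ := fun u => Q (min (max u α) t) with hQ'def
  have hclamp : ∀ u, min (max u α) t ∈ Set.Icc α t := fun u =>
    ⟨le_min (le_max_right _ _) hαt, min_le_right _ _⟩
  have hQ'mono : Monotone Q' := fun u v huv =>
    hQmono (hclamp u) (hclamp v) (min_le_min (max_le_max huv le_rfl) le_rfl)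
  have hQ'eq : ∀ u ∈ Set.Icc α t, Q' u = Q u := by
    intro u hu
    simp only [hQ'def]
    rw [max_eq_left hu.1, min_eq_left hu.2]
  have hQ'le : ∀ u ∈ Set.Ioo α t, Q' u ≤ x := by
    intro u hu
    rw [hQ'eq u ⟨hu.1.le, hu.2.le⟩, ← hQt]
    exact hQmono ⟨hu.1.le, hu.2.le⟩ ⟨hαt, le_rfl⟩ hu.2.le
  -- Step A: rewrite the integrand on Iic x
  have hJF : Set.EqOn (fun y => J (F y))
      ((Set.Ioc (Q α) x).indicator (fun y => (F y - α) / (γ - α))) (Set.Iic x) := by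
    intro y hy
    simp only
    rw [hJ]
    by_cases h : Q α < y
    · have h1 : α ≤ F y := le_of_lt (hFQα ▸ hFmono h)
      have h2 : F y < γ := lt_of_le_of_lt (hFmono.monotone hy) htγ
      rw [Set.indicator_of_mem (Set.mem_Ioc.mpr ⟨h, hy⟩), if_pos ⟨h1, h2⟩]
    · push_neg at h
      have h1 : F y ≤ α := hFQα ▸ hFmono.monotone h
      rw [Set.indicator_of_notMem (fun hc => absurd hc.1 (not_lt.mpr h))]
      by_cases h2 : α ≤ F y
      · have he : F y = α := le_antisymm h1 h2
        rw [if_pos ⟨h2, by linarith⟩, he, sub_self, zero_div]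
      · rw [if_neg (fun hc => h2 hc.1), if_neg (fun hc => h2 (hαγ.le.trans hc.1)),
          if_neg (fun hc => h2 (le_of_lt (lt_of_le_of_lt (by linarith) hc.1)))]
  have stepA : ∫ y in Set.Iic x, J (F y) =
      ∫ y in Set.Ioc (Q α) x, (F y - α) / (γ - α) := by
    rw [setIntegral_congr_fun measurableSet_Iic hJF, setIntegral_indicator measurableSet_Ioc,
      Set.inter_eq_self_of_subset_right Set.Ioc_subset_Iic_self]
  -- integrability facts
  have hFint : IntegrableOn F (Set.Ioc (Q α) x) := hFcont.integrableOn_Ioc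
  have hcint : IntegrableOn (fun _ => α) (Set.Ioc (Q α) x) :=
    integrableOn_const measure_Ioc_lt_top.ne
  have hQ'int : IntegrableOn Q' (Set.Ioo α t) :=
    ((hQ'mono.monotoneOn _).integrableOn_isCompact isCompact_Icc).mono_set
      Set.Ioo_subset_Icc_self
  have hxint : IntegrableOn (fun _ => x) (Set.Ioo α t) :=
    integrableOn_const measure_Ioo_lt_top.ne
  have hαleF : ∀ y ∈ Set.Ioc (Q α) x, α ≤ F y := fun y hy =>
    le_of_lt (hFQα ▸ hFmono hy.1)
  -- Step C: the key identity via areas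
  have hkey : ∫ y in Set.Ioc (Q α) x, (F y - α) = ∫ u in Set.Ioo α t, (x - Q' u) := by
    set S₁ := regionBetween (fun _ => α) F (Set.Ioc (Q α) x) with hS₁
    set S₂ := regionBetween Q' (fun _ => x) (Set.Ioo α t) with hS₂
    have h1 : (volume : Measure ℝ).prod volume S₁ =
        ENNReal.ofReal (∫ y in Set.Ioc (Q α) x, (F y - α)) := by
      rw [volume_regionBetween_eq_integral hcint hFint measurableSet_Ioc hαleF]
      rfl
    have h2 : (volume : Measure ℝ).prod volume S₂ =
        ENNReal.ofReal (∫ u in Set.Ioo α t, (x - Q' u)) := by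
      rw [volume_regionBetween_eq_integral hQ'int hxint measurableSet_Ioo hQ'le]
      rfl
    have hmeas1 : MeasurableSet S₁ :=
      measurableSet_regionBetween measurable_const hFcont.measurable measurableSet_Ioc
    have hswap : (volume : Measure ℝ).prod volume (Prod.swap ⁻¹' S₁) =
        (volume : Measure ℝ).prod volume S₁ :=
      (Measure.measurePreserving_swap).measure_preimage hmeas1.nullMeasurableSet
    have hsub1 : S₂ ⊆ Prod.swap ⁻¹' S₁ := by
      rintro ⟨u, y⟩ ⟨hu, hy⟩
      have huIcc : u ∈ Set.Icc α t := ⟨hu.1.le, hu.2.le⟩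
      rw [hQ'eq u huIcc] at hy
      have hQαu : Q α < Q u := hQlt α ⟨le_rfl, hαt⟩ u huIcc hu.1
      have huFy : u < F y := by
        have := hFmono hy.1
        rwa [hFQ' u huIcc] at this
      exact ⟨⟨hQαu.trans hy.1, hy.2.le⟩, hu.1, huFy⟩
    have hsub2 : Prod.swap ⁻¹' S₁ ⊆ S₂ ∪ (Set.univ ×ˢ ({x} : Set ℝ)) := by
      rintro ⟨u, y⟩ ⟨hy, hu⟩
      rcases eq_or_lt_of_le hy.2 with he | hyx
      · exact Or.inr ⟨Set.mem_univ _, he⟩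
      · left
        have hFyt : F y < t := hFmono hyx
        have hut : u ∈ Set.Ioo α t := ⟨hu.1, hu.2.trans hFyt⟩
        have huIcc : u ∈ Set.Icc α t := ⟨hut.1.le, hut.2.le⟩
        have hQuy : Q u < y := by
          have := hQlt u huIcc (F y) ⟨(hαleF y ⟨hy.1, hy.2⟩), hFyt.le⟩ hu.2
          rwa [hQF y] at this
        rw [hS₂]
        refine ⟨hut, ?_, hyx⟩
        rwa [hQ'eq u huIcc]
    have hline : (volume : Measure ℝ).prod volume (Set.univ ×ˢ ({x} : Set ℝ)) = 0 := by
      rw [Measure.prod_prod]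
      simp
    have hmeq : (volume : Measure ℝ).prod volume S₂ =
        (volume : Measure ℝ).prod volume S₁ := by
      refine le_antisymm (hswap ▸ measure_mono hsub1) ?_
      rw [← hswap]
      refine le_trans (measure_mono hsub2) ?_
      refine le_trans (measure_union_le _ _) ?_
      rw [hline, add_zero]
    rw [h1, h2] at hmeq
    have hn1 : 0 ≤ ∫ y in Set.Ioc (Q α) x, (F y - α) :=
      setIntegral_nonneg measurableSet_Ioc (fun y hy => sub_nonneg.mpr (hαleF y hy))
    have hn2 : 0 ≤ ∫ u in Set.Ioo α t, (x - Q' u) :=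
      setIntegral_nonneg measurableSet_Ioo (fun u hu => sub_nonneg.mpr (hQ'le u hu))
    exact ((ENNReal.ofReal_eq_ofReal_iff hn2 hn1).mp hmeq).symm
  -- compute the right-hand integral
  have hQ'Ioo : ∫ u in Set.Ioo α t, Q' u = ∫ u in α..t, Q u := by
    rw [← integral_Ioc_eq_integral_Ioo, ← intervalIntegral.integral_of_le hαt]
    exact intervalIntegral.integral_congr fun u hu =>
      hQ'eq u (by rwa [Set.uIcc_of_le hαt] at hu)
  have hsum : ∫ u in Set.Ioo α t, (x - Q' u) = (t - α) * x - ∫ u in α..t, Q u := by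
    rw [integral_sub hxint hQ'int, hQ'Ioo, setIntegral_const, Real.volume_real_Ioo_of_le hαt,
      smul_eq_mul]
  -- put everything together
  have hdiv : ∫ y in Set.Ioc (Q α) x, (F y - α) / (γ - α) =
      (γ - α)⁻¹ * ∫ y in Set.Ioc (Q α) x, (F y - α) := by
    simp_rw [div_eq_inv_mul]
    exact integral_const_mul _ _
  rw [stepA, hdiv, hkey, hsum, one_div]
  ring
end

section
/- Let x satisfy Q(γ) ≤ x ≤ Q(1−γ). Then ∫_{-∞}^{x} J(F(y)) dy = (1/(γ−α))·( (γ−α)·Q(γ) − ∫_{α}^{γ} Q(u) du ) + x − Q(γ). -/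
open MeasureTheory intervalIntegral

lemma fubini_key (α γ a b : ℝ) (F Q : ℝ → ℝ) (hF : Continuous F)
    (hαγ : α < γ) (hab : a < b)
    (hiff : ∀ u ∈ Set.Ioc α γ, ∀ y : ℝ, u ≤ F y ↔ Q u ≤ y)
    (hFy : ∀ y ∈ Set.Ioc a b, α < F y ∧ F y ≤ γ)
    (hQb : ∀ u ∈ Set.Ioc α γ, a < Q u ∧ Q u ≤ b) :
    ∫ y in Set.Ioc a b, (F y - α) = ∫ u in Set.Ioc α γ, (b - Q u) := by
  set s : Set ℝ := Set.Ioc a b with hs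
  set t : Set ℝ := Set.Ioc α γ with ht
  set g : ℝ → ℝ → ℝ := fun y u => if u ≤ F y then 1 else 0 with hg
  have hgm : Measurable (Function.uncurry g) := by
    have hset : MeasurableSet {p : ℝ × ℝ | p.2 ≤ F p.1} :=
      measurableSet_le measurable_snd (hF.measurable.comp measurable_fst)
    exact Measurable.ite hset measurable_const measurable_const
  haveI : IsFiniteMeasure (volume.restrict s) := by
    constructor
    simp [hs, Real.volume_Ioc]
  haveI : IsFiniteMeasure (volume.restrict t) := by
    constructor
    simp [ht, Real.volume_Ioc]
  have hint : Integrable (Function.uncurry g)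
      ((volume.restrict s).prod (volume.restrict t)) := by
    refine (integrable_const (1:ℝ)).mono' hgm.aestronglyMeasurable ?_
    refine ae_of_all _ fun p => ?_
    by_cases h : p.2 ≤ F p.1 <;> simp [Function.uncurry, hg, h]
  have hswap := MeasureTheory.integral_integral_swap hint
  have hA : ∀ y ∈ s, (∫ u in t, g y u) = F y - α := by
    intro y hy
    obtain ⟨h1, h2⟩ := hFy y hy
    have heq : ∀ u : ℝ, g y u = Set.indicator (Set.Iic (F y)) (fun _ => (1:ℝ)) u := by
      intro u; by_cases h : u ≤ F y <;> simp [hg, h]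
    rw [show (fun u => g y u) = fun u => Set.indicator (Set.Iic (F y)) (fun _ => (1:ℝ)) u
      from funext heq]
    rw [MeasureTheory.setIntegral_indicator measurableSet_Iic]
    have hset : t ∩ Set.Iic (F y) = Set.Ioc α (F y) := by
      ext u
      simp only [ht, Set.mem_inter_iff, Set.mem_Ioc, Set.mem_Iic]
      constructor
      · rintro ⟨⟨hu1, _⟩, hu3⟩; exact ⟨hu1, hu3⟩
      · rintro ⟨hu1, hu2⟩; exact ⟨⟨hu1, le_trans hu2 h2⟩, hu2⟩
    rw [hset]
    simp [Real.volume_Ioc, ENNReal.toReal_ofReal (by linarith : (0:ℝ) ≤ F y - α), h1.le]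
  have hB : ∀ u ∈ t, (∫ y in s, g y u) = b - Q u := by
    intro u hu
    obtain ⟨h1, h2⟩ := hQb u hu
    have heq : ∀ y : ℝ, g y u = Set.indicator (Set.Ici (Q u)) (fun _ => (1:ℝ)) y := by
      intro y
      by_cases h : Q u ≤ y
      · simp [hg, (hiff u hu y).mpr h, h]
      · have : ¬ u ≤ F y := fun hc => h ((hiff u hu y).mp hc)
        simp [hg, this, h]
    rw [show (fun y => g y u) = fun y => Set.indicator (Set.Ici (Q u)) (fun _ => (1:ℝ)) y
      from funext heq]
    rw [MeasureTheory.setIntegral_indicator measurableSet_Ici]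
    have hset : s ∩ Set.Ici (Q u) = Set.Icc (Q u) b := by
      ext y
      simp only [hs, Set.mem_inter_iff, Set.mem_Ioc, Set.mem_Ici, Set.mem_Icc]
      constructor
      · rintro ⟨⟨_, hy2⟩, hy3⟩; exact ⟨hy3, hy2⟩
      · rintro ⟨hy1, hy2⟩; exact ⟨⟨lt_of_lt_of_le h1 hy1, hy2⟩, hy1⟩
    rw [hset]
    simp [Real.volume_Icc, ENNReal.toReal_ofReal (by linarith : (0:ℝ) ≤ b - Q u), h2]
  calc ∫ y in s, (F y - α) = ∫ y in s, ∫ u in t, g y u :=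
        (setIntegral_congr_fun measurableSet_Ioc fun y hy => (hA y hy).symm)
    _ = ∫ u in t, ∫ y in s, g y u := hswap
    _ = ∫ u in t, (b - Q u) := setIntegral_congr_fun measurableSet_Ioc hB

theorem smoothly_trimmed_E2
    (α γ : ℝ) (hα : 0 < α) (hαγ : α < γ) (hγ : γ ≤ 1/2)
    (J F Q : ℝ → ℝ)
    (hJ : ∀ u : ℝ, J u =
      if α ≤ u ∧ u < γ then (u - α) / (γ - α)
      else if γ ≤ u ∧ u ≤ 1 - γ then 1
      else if 1 - γ < u ∧ u ≤ 1 - α then (1 - u - α) / (γ - α)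
      else 0)
    (hFcont : Continuous F) (hFmono : StrictMono F)
    (hFQ : ∀ p ∈ Set.Ioo (0:ℝ) 1, F (Q p) = p)
    (hQF : ∀ x : ℝ, Q (F x) = x)
    (x : ℝ) (hx1 : Q γ ≤ x) (hx2 : x ≤ Q (1 - γ)) :
    ∫ y in Set.Iic x, J (F y) =
      (1 / (γ - α)) * ((γ - α) * Q γ - (∫ u in α..γ, Q u)) + x - Q γ := by
  have hγ0 : 0 < γ := lt_trans hα hαγ
  have hγ1 : γ < 1 := by linarith
  have hα1 : α < 1 := by linarith
  have hFQα : F (Q α) = α := hFQ α ⟨hα, hα1⟩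
  have hFQγ : F (Q γ) = γ := hFQ γ ⟨hγ0, hγ1⟩
  have hFQγ' : F (Q (1 - γ)) = 1 - γ := hFQ (1 - γ) ⟨by linarith, by linarith⟩
  have hQlt : Q α < Q γ := by
    have := hFmono.lt_iff_lt (a := Q α) (b := Q γ)
    rw [hFQα, hFQγ] at this
    exact this.mp hαγ
  -- pointwise values of J ∘ F
  have hJ0 : ∀ y ∈ Set.Iic (Q α), J (F y) = 0 := by
    intro y hy
    have hFy : F y ≤ α := by
      rw [← hFQα]; exact hFmono.le_iff_le.mpr hy
    rw [hJ]
    split_ifs with h h2 h3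
    · have : F y = α := le_antisymm hFy h.1
      rw [this]; simp
    · linarith [h2.1]
    · linarith [h3.1]
    · rfl
  have hJmid : ∀ y ∈ Set.Ioc (Q α) (Q γ), J (F y) = (F y - α) / (γ - α) := by
    intro y hy
    have h1 : α < F y := by rw [← hFQα]; exact hFmono hy.1
    have h2 : F y ≤ γ := by rw [← hFQγ]; exact hFmono.le_iff_le.mpr hy.2
    rw [hJ]
    by_cases hc : F y < γ
    · rw [if_pos ⟨h1.le, hc⟩]
    · have hFy : F y = γ := le_antisymm h2 (not_lt.mp hc)
      rw [if_neg (fun h => hc h.2), if_pos ⟨hFy.ge, by linarith⟩, hFy]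
      exact (div_self (ne_of_gt (by linarith))).symm
  have hJ1 : ∀ y ∈ Set.Ioc (Q γ) x, J (F y) = 1 := by
    intro y hy
    have h1 : γ < F y := by rw [← hFQγ]; exact hFmono hy.1
    have h2 : F y ≤ 1 - γ := by
      rw [← hFQγ']; exact hFmono.le_iff_le.mpr (le_trans hy.2 hx2)
    rw [hJ, if_neg (fun h => absurd h.2 (not_lt.mpr h1.le)), if_pos ⟨h1.le, h2⟩]
  -- integrability on the pieces
  have I1 : IntegrableOn (fun y => J (F y)) (Set.Iic (Q α)) volume := by
    refine (integrableOn_zero (μ := volume)).congr_fun ?_ measurableSet_Iic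
    intro y hy; exact (hJ0 y hy).symm
  have I2 : IntegrableOn (fun y => J (F y)) (Set.Ioc (Q α) (Q γ)) volume := by
    have hc : Continuous (fun y => (F y - α) / (γ - α)) :=
      (hFcont.sub continuous_const).div_const _
    exact hc.integrableOn_Ioc.congr_fun (fun y hy => (hJmid y hy).symm) measurableSet_Ioc
  have I3 : IntegrableOn (fun y => J (F y)) (Set.Ioc (Q γ) x) volume := by
    have hc : Continuous (fun _ : ℝ => (1:ℝ)) := continuous_const
    exact hc.integrableOn_Ioc.congr_fun (fun y hy => (hJ1 y hy).symm) measurableSet_Ioc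
  -- split the integral
  have hsplit2 : Set.Iic (Q γ) = Set.Iic (Q α) ∪ Set.Ioc (Q α) (Q γ) :=
    (Set.Iic_union_Ioc_eq_Iic hQlt.le).symm
  have hsplit1 : Set.Iic x = Set.Iic (Q γ) ∪ Set.Ioc (Q γ) x :=
    (Set.Iic_union_Ioc_eq_Iic hx1).symm
  have IIic : IntegrableOn (fun y => J (F y)) (Set.Iic (Q γ)) volume := by
    rw [hsplit2]; exact I1.union I2
  have step1 : ∫ y in Set.Iic x, J (F y) =
      (∫ y in Set.Iic (Q γ), J (F y)) + ∫ y in Set.Ioc (Q γ) x, J (F y) := by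
    rw [hsplit1]
    exact setIntegral_union (Set.Iic_disjoint_Ioc le_rfl) measurableSet_Ioc IIic I3
  have step2 : ∫ y in Set.Iic (Q γ), J (F y) =
      (∫ y in Set.Iic (Q α), J (F y)) + ∫ y in Set.Ioc (Q α) (Q γ), J (F y) := by
    rw [hsplit2]
    exact setIntegral_union (Set.Iic_disjoint_Ioc le_rfl) measurableSet_Ioc I1 I2
  have v1 : ∫ y in Set.Iic (Q α), J (F y) = 0 := by
    rw [setIntegral_congr_fun measurableSet_Iic hJ0]
    simp
  have v3 : ∫ y in Set.Ioc (Q γ) x, J (F y) = x - Q γ := by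
    rw [setIntegral_congr_fun measurableSet_Ioc hJ1]
    simp [Real.volume_Ioc, ENNReal.toReal_ofReal (by linarith : (0:ℝ) ≤ x - Q γ), hx1]
  -- the middle piece
  have hQint : IntegrableOn Q (Set.Ioc α γ) volume := by
    have hmono : MonotoneOn Q (Set.Icc α γ) := by
      intro p hp q hq hpq
      have hfp : F (Q p) = p := hFQ p ⟨lt_of_lt_of_le hα hp.1, lt_of_le_of_lt hp.2 hγ1⟩
      have hfq : F (Q q) = q := hFQ q ⟨lt_of_lt_of_le hα hq.1, lt_of_le_of_lt hq.2 hγ1⟩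
      have := hFmono.le_iff_le (a := Q p) (b := Q q)
      rw [hfp, hfq] at this
      exact this.mp hpq
    exact (hmono.integrableOn_isCompact isCompact_Icc).mono_set Set.Ioc_subset_Icc_self
  have key : ∫ y in Set.Ioc (Q α) (Q γ), (F y - α) =
      ∫ u in Set.Ioc α γ, (Q γ - Q u) := by
    refine fubini_key α γ (Q α) (Q γ) F Q hFcont hαγ hQlt ?_ ?_ ?_
    · intro u hu y
      have hu' : u ∈ Set.Ioo (0:ℝ) 1 := ⟨lt_trans hα hu.1, lt_of_le_of_lt hu.2 hγ1⟩
      have hfu : F (Q u) = u := hFQ u hu'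
      have := hFmono.le_iff_le (a := Q u) (b := y)
      rw [hfu] at this
      exact this
    · intro y hy
      exact ⟨by rw [← hFQα]; exact hFmono hy.1, by rw [← hFQγ]; exact hFmono.le_iff_le.mpr hy.2⟩
    · intro u hu
      have hu' : u ∈ Set.Ioo (0:ℝ) 1 := ⟨lt_trans hα hu.1, lt_of_le_of_lt hu.2 hγ1⟩
      have hfu : F (Q u) = u := hFQ u hu'
      constructor
      · have := hFmono.lt_iff_lt (a := Q α) (b := Q u); rw [hFQα, hfu] at this
        exact this.mp hu.1
      · have := hFmono.le_iff_le (a := Q u) (b := Q γ); rw [hFQγ, hfu] at this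
        exact this.mp hu.2
  have v2 : ∫ y in Set.Ioc (Q α) (Q γ), J (F y) =
      (1 / (γ - α)) * ((γ - α) * Q γ - ∫ u in α..γ, Q u) := by
    rw [setIntegral_congr_fun measurableSet_Ioc hJmid, MeasureTheory.integral_div, key]
    have hsub : ∫ u in Set.Ioc α γ, (Q γ - Q u) =
        (∫ _ in Set.Ioc α γ, Q γ) - ∫ u in Set.Ioc α γ, Q u := by
      exact integral_sub ((integrableOn_const_iff (C := Q γ)).mpr (Or.inr (by simp [Real.volume_Ioc]))) hQint
    rw [hsub, setIntegral_const, intervalIntegral.integral_of_le hαγ.le]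
    simp only [Real.volume_real_Ioc_of_le hαγ.le, Real.volume_Ioc, ENNReal.toReal_ofReal (by linarith : (0:ℝ) ≤ γ - α),
      smul_eq_mul]
    field_simp
  rw [step1, step2, v1, v2, v3]
  ring
end

section
/- Let x satisfy Q(1−γ) < x ≤ Q(1−α). Then ∫_{-∞}^{x} J(F(y)) dy = (1/(γ−α))·( (γ−α)·Q(γ) − ∫_{α}^{γ} Q(u) du ) + Q(1−γ) − Q(γ) + (1/(γ−α))·( (1−α)·x + (α−γ)·Q(1−γ) − F(x)·x + ∫_{1−γ}^{F(x)} Q(u) du ). -/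
open MeasureTheory intervalIntegral

section
open Set

lemma stE3_inv_integral (F Q : ℝ → ℝ) (hFcont : Continuous F) (hFmono : StrictMono F)
    (hQF : ∀ t : ℝ, Q (F t) = t) (c d : ℝ) (hcd : c ≤ d) :
    ∫ y in c..d, F y = d * F d - c * F c - ∫ u in (F c)..(F d), Q u := by
  set a := F c with ha
  set b := F d with hb
  have hab : a ≤ b := hFmono.monotone hcd
  have hQmemb : ∀ u ∈ Icc a b, F (Q u) = u ∧ Q u ∈ Icc c d := by
    intro u hu
    obtain ⟨t, ht, hFt⟩ := intermediate_value_Icc hcd hFcont.continuousOn hu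
    rw [← hFt, hQF]
    exact ⟨rfl, ht⟩
  have hQmono : MonotoneOn Q (Icc a b) := by
    intro u hu v hv huv
    have h1 := hQmemb u hu
    have h2 := hQmemb v hv
    exact (hFmono.le_iff_le).mp (by rw [h1.1, h2.1]; exact huv)
  have hQint : IntegrableOn Q (Ioc a b) :=
    (hQmono.integrableOn_isCompact isCompact_Icc).mono_set Ioc_subset_Icc_self
  have hFint : IntegrableOn F (Ioc c d) := hFcont.integrableOn_Ioc
  set S : Set (ℝ × ℝ) :=
    {p : ℝ × ℝ | p.1 ∈ Ioc c d ∧ p.2 ∈ Ioc a b ∧ p.2 ≤ F p.1} with hS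
  have hSmeas : MeasurableSet S := by
    apply MeasurableSet.inter
    · exact measurable_fst measurableSet_Ioc
    apply MeasurableSet.inter
    · exact measurable_snd measurableSet_Ioc
    · exact measurableSet_le measurable_snd (hFcont.measurable.comp measurable_fst)
  have hSsub : S ⊆ (Ioc c d) ×ˢ (Ioc a b) := fun p hp => ⟨hp.1, hp.2.1⟩
  have hSfin : volume S < ⊤ := by
    refine lt_of_le_of_lt (measure_mono hSsub) ?_
    rw [Measure.volume_eq_prod, Measure.prod_prod, Real.volume_Ioc, Real.volume_Ioc]
    exact ENNReal.mul_lt_top ENNReal.ofReal_lt_top ENNReal.ofReal_lt_top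
  have hint : Integrable (Function.uncurry fun y u => S.indicator (fun _ => (1:ℝ)) (y, u)) := by
    have : (Function.uncurry fun y u => S.indicator (fun _ => (1:ℝ)) (y, u))
        = S.indicator (fun _ => (1:ℝ)) := by
      funext p; cases p; rfl
    rw [this, integrable_indicator_iff hSmeas]
    exact integrableOn_const hSfin.ne
  have swap := MeasureTheory.integral_integral_swap hint
  have hL : (∫ y : ℝ, ∫ u : ℝ, S.indicator (fun _ => (1:ℝ)) (y, u))
      = ∫ y in Ioc c d, (F y - a) := by
    rw [← MeasureTheory.integral_indicator measurableSet_Ioc]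
    congr 1
    funext y
    by_cases hy : y ∈ Ioc c d
    · have : (fun u => S.indicator (fun _ => (1:ℝ)) (y, u))
          = (Ioc a (F y)).indicator (fun _ => (1:ℝ)) := by
        funext u
        by_cases hu : u ∈ Ioc a (F y)
        · rw [indicator_of_mem hu, indicator_of_mem]
          exact ⟨hy, ⟨hu.1, hu.2.trans (hFmono.monotone hy.2)⟩, hu.2⟩
        · rw [indicator_of_notMem hu, indicator_of_notMem]
          intro hmem
          exact hu ⟨hmem.2.1.1, hmem.2.2⟩
      rw [this, MeasureTheory.integral_indicator measurableSet_Ioc, setIntegral_const, smul_eq_mul,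
        mul_one, Real.volume_real_Ioc, indicator_of_mem hy, max_eq_left]
      have : a ≤ F y := hFmono.monotone hy.1.le
      linarith
    · have : (fun u => S.indicator (fun _ => (1:ℝ)) (y, u)) = fun _ => (0:ℝ) := by
        funext u
        rw [indicator_of_notMem]
        intro hmem; exact hy hmem.1
      rw [this, indicator_of_notMem hy, MeasureTheory.integral_zero]
  have hR : (∫ u : ℝ, ∫ y : ℝ, S.indicator (fun _ => (1:ℝ)) (y, u))
      = ∫ u in Ioc a b, (d - Q u) := by
    rw [← MeasureTheory.integral_indicator measurableSet_Ioc]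
    congr 1
    funext u
    by_cases hu : u ∈ Ioc a b
    · have hQu := hQmemb u (Ioc_subset_Icc_self hu)
      have hQgt : c < Q u := by
        rcases lt_or_ge c (Q u) with h | h
        · exact h
        · exfalso
          have : u ≤ a := by
            rw [← hQu.1, ha] at hu ⊢
            exact hFmono.monotone h
          exact absurd hu.1 (not_lt.mpr this)
      have : (fun y => S.indicator (fun _ => (1:ℝ)) (y, u))
          = (Icc (Q u) d).indicator (fun _ => (1:ℝ)) := by
        funext y
        by_cases hy : y ∈ Icc (Q u) d
        · rw [indicator_of_mem hy, indicator_of_mem]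
          refine ⟨⟨hQgt.trans_le hy.1, hy.2⟩, hu, ?_⟩
          rw [← hQu.1]; exact hFmono.monotone hy.1
        · rw [indicator_of_notMem hy, indicator_of_notMem]
          intro hmem
          apply hy
          refine ⟨?_, hmem.1.2⟩
          have : F (Q u) ≤ F y := by rw [hQu.1]; exact hmem.2.2
          exact hFmono.le_iff_le.mp this
      rw [this, MeasureTheory.integral_indicator measurableSet_Icc, setIntegral_const, smul_eq_mul,
        mul_one, Real.volume_real_Icc, indicator_of_mem hu, max_eq_left]
      linarith [hQu.2.2]
    · have : (fun y => S.indicator (fun _ => (1:ℝ)) (y, u)) = fun _ => (0:ℝ) := by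
        funext y
        rw [indicator_of_notMem]
        intro hmem; exact hu hmem.2.1
      rw [this, indicator_of_notMem hu, MeasureTheory.integral_zero]
  rw [hL, hR] at swap
  have hvol : ∀ m : ℝ, (volume (Ioc m m)).toReal = 0 := by intro m; simp
  have e1 : ∫ y in Ioc c d, (F y - a) = (∫ y in c..d, F y) - (d - c) * a := by
    rw [← intervalIntegral.integral_of_le hcd,
      intervalIntegral.integral_sub (intervalIntegrable_iff_integrableOn_Ioc_of_le hcd
        |>.mpr hFint) (intervalIntegrable_const), intervalIntegral.integral_const,
      smul_eq_mul]
  have e2 : ∫ u in Ioc a b, (d - Q u) = (b - a) * d - (∫ u in a..b, Q u) := by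
    rw [← intervalIntegral.integral_of_le hab,
      intervalIntegral.integral_sub intervalIntegrable_const
        (intervalIntegrable_iff_integrableOn_Ioc_of_le hab |>.mpr hQint),
      intervalIntegral.integral_const, smul_eq_mul]
  rw [e1, e2] at swap
  
  linarith [swap]

theorem smoothly_trimmed_E3
    (α γ : ℝ) (hα : 0 < α) (hαγ : α < γ) (hγ : γ ≤ 1/2)
    (J F Q : ℝ → ℝ)
    (hJ : ∀ u : ℝ, J u =
      if α ≤ u ∧ u < γ then (u - α) / (γ - α)
      else if γ ≤ u ∧ u ≤ 1 - γ then 1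
      else if 1 - γ < u ∧ u ≤ 1 - α then (1 - u - α) / (γ - α)
      else 0)
    (hFcont : Continuous F) (hFmono : StrictMono F)
    (hFQ : ∀ p ∈ Set.Ioo (0:ℝ) 1, F (Q p) = p)
    (hQF : ∀ x : ℝ, Q (F x) = x)
    (x : ℝ) (hx1 : Q (1 - γ) < x) (hx2 : x ≤ Q (1 - α)) :
    ∫ y in Set.Iic x, J (F y) =
      (1 / (γ - α)) * ((γ - α) * Q γ - (∫ u in α..γ, Q u))
        + Q (1 - γ) - Q γ
        + (1 / (γ - α)) * ((1 - α) * x + (α - γ) * Q (1 - γ) - F x * x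
            + (∫ u in (1 - γ)..(F x), Q u)) := by
  have hγα : γ - α ≠ 0 := by intro h; linarith
  have Fqα : F (Q α) = α := hFQ α ⟨hα, by linarith⟩
  have Fqγ : F (Q γ) = γ := hFQ γ ⟨by linarith, by linarith⟩
  have Fq1γ : F (Q (1 - γ)) = 1 - γ := hFQ _ ⟨by linarith, by linarith⟩
  have Fq1α : F (Q (1 - α)) = 1 - α := hFQ _ ⟨by linarith, by linarith⟩
  have hqαγ : Q α < Q γ := hFmono.lt_iff_lt.mp (by rw [Fqα, Fqγ]; exact hαγ)
  have hqγ1γ : Q γ ≤ Q (1 - γ) :=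
    hFmono.le_iff_le.mp (by rw [Fqγ, Fq1γ]; linarith)
  have hFx1 : 1 - γ < F x := by rw [← Fq1γ]; exact hFmono hx1
  have hFx2 : F x ≤ 1 - α := by rw [← Fq1α]; exact hFmono.monotone hx2
  -- pointwise descriptions
  have hg0 : EqOn (fun y => J (F y)) (fun _ => (0:ℝ)) (Iic (Q α)) := by
    intro y hy
    have hle : F y ≤ α := by rw [← Fqα]; exact hFmono.monotone hy
    simp only [hJ (F y)]
    split_ifs with h1 h2 h3
    · have : F y = α := le_antisymm hle h1.1
      rw [this]; simp
    · exfalso; linarith [h2.1]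
    · exfalso; linarith [h3.1]
    · rfl
  have hg1 : EqOn (fun y => J (F y)) (fun y => (F y - α) / (γ - α)) (Ioc (Q α) (Q γ)) := by
    intro y hy
    have h1 : α < F y := by rw [← Fqα]; exact hFmono hy.1
    have h2 : F y ≤ γ := by rw [← Fqγ]; exact hFmono.monotone hy.2
    simp only [hJ (F y)]
    split_ifs with ha hb hc
    · rfl
    · have : F y = γ := le_antisymm h2 (by push_neg at ha; exact hb.1)
      rw [this]; rw [div_self hγα]
    · exfalso; linarith [hc.1]
    · exfalso
      push_neg at ha hb
      have := ha h1.le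
      have := hb (by linarith)
      linarith
  have hg2 : EqOn (fun y => J (F y)) (fun _ => (1:ℝ)) (Ioc (Q γ) (Q (1 - γ))) := by
    intro y hy
    have h1 : γ < F y := by rw [← Fqγ]; exact hFmono hy.1
    have h2 : F y ≤ 1 - γ := by rw [← Fq1γ]; exact hFmono.monotone hy.2
    simp only [hJ (F y)]
    split_ifs with ha hb hc
    · exfalso; linarith [ha.2]
    · rfl
    · exfalso; push_neg at hb; linarith [hb h1.le]
    · exfalso; push_neg at hb; linarith [hb h1.le]
  have hg3 : EqOn (fun y => J (F y)) (fun y => (1 - F y - α) / (γ - α)) (Ioc (Q (1 - γ)) x) := by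
    intro y hy
    have h1 : 1 - γ < F y := by rw [← Fq1γ]; exact hFmono hy.1
    have h2 : F y ≤ 1 - α := le_trans (hFmono.monotone hy.2) hFx2
    simp only [hJ (F y)]
    split_ifs with ha hb hc
    · exfalso; linarith [ha.2]
    · exfalso; linarith [hb.2]
    · rfl
    · exfalso; exact hc ⟨h1, h2⟩
  -- integrability
  have hFmeas := hFcont.measurable
  have int0 : IntegrableOn (fun y => J (F y)) (Iic (Q α)) :=
    (integrableOn_congr_fun hg0 measurableSet_Iic).mpr (integrableOn_zero)
  have int1 : IntegrableOn (fun y => J (F y)) (Ioc (Q α) (Q γ)) :=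
    (integrableOn_congr_fun hg1 measurableSet_Ioc).mpr
      (((hFcont.sub continuous_const).div_const _).integrableOn_Ioc)
  have int2 : IntegrableOn (fun y => J (F y)) (Ioc (Q γ) (Q (1 - γ))) :=
    (integrableOn_congr_fun hg2 measurableSet_Ioc).mpr
      (continuous_const.integrableOn_Ioc)
  have int3 : IntegrableOn (fun y => J (F y)) (Ioc (Q (1 - γ)) x) :=
    (integrableOn_congr_fun hg3 measurableSet_Ioc).mpr
      (((continuous_const.sub hFcont).sub continuous_const).div_const _).integrableOn_Ioc
  -- splitting
  have hsplit : ∫ y in Iic x, J (F y)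
      = (∫ y in Iic (Q α), J (F y)) + ((∫ y in Ioc (Q α) (Q γ), J (F y))
        + ((∫ y in Ioc (Q γ) (Q (1 - γ)), J (F y)) + (∫ y in Ioc (Q (1 - γ)) x, J (F y)))) := by
    have d1 : Disjoint (Ioc (Q γ) (Q (1 - γ))) (Ioc (Q (1 - γ)) x) := by
      rw [Set.disjoint_left]; rintro y ⟨_, h1⟩ ⟨h2, _⟩; exact absurd h2 (not_lt.mpr h1)
    have d2 : Disjoint (Ioc (Q α) (Q γ)) (Ioc (Q γ) (Q (1 - γ)) ∪ Ioc (Q (1 - γ)) x) := by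
      rw [Set.disjoint_left]; rintro y ⟨_, h1⟩ (⟨h2, _⟩ | ⟨h2, _⟩)
      · exact absurd h2 (not_lt.mpr h1)
      · exact absurd (h1.trans hqγ1γ) (not_le.mpr h2)
    have d3 : Disjoint (Iic (Q α)) (Ioc (Q α) (Q γ) ∪ (Ioc (Q γ) (Q (1 - γ)) ∪ Ioc (Q (1 - γ)) x)) := by
      rw [Set.disjoint_left]; rintro y h1 (⟨h2, _⟩ | (⟨h2, _⟩ | ⟨h2, _⟩))
      · exact absurd h2 (not_lt.mpr h1)
      · exact absurd h1 (not_le.mpr (hqαγ.trans h2))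
      · exact absurd h1 (not_le.mpr (lt_of_lt_of_le hqαγ (hqγ1γ.trans h2.le)))
    have hun : Iic x = Iic (Q α) ∪ (Ioc (Q α) (Q γ) ∪ (Ioc (Q γ) (Q (1 - γ)) ∪ Ioc (Q (1 - γ)) x)) := by
      rw [Ioc_union_Ioc_eq_Ioc hqγ1γ hx1.le, Ioc_union_Ioc_eq_Ioc hqαγ.le (hqγ1γ.trans hx1.le),
        Iic_union_Ioc_eq_Iic (hqαγ.le.trans (hqγ1γ.trans hx1.le))]
    rw [hun]
    rw [setIntegral_union d3 (measurableSet_Ioc.union (measurableSet_Ioc.union measurableSet_Ioc))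
      int0 ((int1.union (int2.union int3)))]
    rw [setIntegral_union d2 (measurableSet_Ioc.union measurableSet_Ioc) int1 (int2.union int3)]
    rw [setIntegral_union d1 measurableSet_Ioc int2 int3]
  -- values
  have v0 : ∫ y in Iic (Q α), J (F y) = 0 :=
    setIntegral_eq_zero_of_forall_eq_zero hg0
  have K1 := stE3_inv_integral F Q hFcont hFmono hQF (Q α) (Q γ) hqαγ.le
  rw [Fqα, Fqγ] at K1
  have K2 := stE3_inv_integral F Q hFcont hFmono hQF (Q (1 - γ)) x hx1.le
  rw [Fq1γ] at K2
  have intF1 : IntervalIntegrable F volume (Q α) (Q γ) := hFcont.intervalIntegrable _ _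
  have intF2 : IntervalIntegrable F volume (Q (1 - γ)) x := hFcont.intervalIntegrable _ _
  have v1 : ∫ y in Ioc (Q α) (Q γ), J (F y)
      = ((∫ y in (Q α)..(Q γ), F y) - (Q γ - Q α) * α) / (γ - α) := by
    rw [setIntegral_congr_fun measurableSet_Ioc hg1, ← intervalIntegral.integral_of_le hqαγ.le,
      intervalIntegral.integral_div,
      intervalIntegral.integral_sub intF1 intervalIntegrable_const,
      intervalIntegral.integral_const, smul_eq_mul]
  have v2 : ∫ y in Ioc (Q γ) (Q (1 - γ)), J (F y) = Q (1 - γ) - Q γ := by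
    rw [setIntegral_congr_fun measurableSet_Ioc hg2, ← intervalIntegral.integral_of_le hqγ1γ]
    simp
  have v3 : ∫ y in Ioc (Q (1 - γ)) x, J (F y)
      = ((x - Q (1 - γ)) * (1 - α) - (∫ y in (Q (1 - γ))..x, F y)) / (γ - α) := by
    rw [setIntegral_congr_fun measurableSet_Ioc hg3, ← intervalIntegral.integral_of_le hx1.le,
      intervalIntegral.integral_div]
    congr 1
    have : (fun y => 1 - F y - α) = fun y => (1 - α) - F y := by funext y; ring
    rw [intervalIntegral.integral_congr (fun y _ => by ring : EqOn (fun y => 1 - F y - α) (fun y => (1 - α) - F y) _),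
      intervalIntegral.integral_sub intervalIntegrable_const intF2,
      intervalIntegral.integral_const, smul_eq_mul]
  rw [hsplit, v0, v1, v2, v3, K1, K2]
  field_simp
  ring

end
end

section
/- Let x satisfy x > Q(1−α). Then ∫_{-∞}^{x} J(F(y)) dy = (1/(γ−α))·( (γ−α)·Q(γ) − ∫_{α}^{γ} Q(u) du ) + Q(1−γ) − Q(γ) + (1/(γ−α))·( (α−γ)·Q(1−γ) + ∫_{1−γ}^{1−α} Q(u) du ). In particular this value is independent of x. -/
open MeasureTheory intervalIntegral

lemma inv_integral_key (F Q : ℝ → ℝ) (hFcont : Continuous F) (hFmono : StrictMono F)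
    (hFQ : ∀ p ∈ Set.Ioo (0:ℝ) 1, F (Q p) = p)
    (a b : ℝ) (ha : a ∈ Set.Ioo (0:ℝ) 1) (hb : b ∈ Set.Ioo (0:ℝ) 1) (hab : a ≤ b) :
    ∫ y in Q a..Q b, F y = b * Q b - a * Q a - ∫ u in a..b, Q u := by
  have hQa := hFQ a ha
  have hQb := hFQ b hb
  have hQab : Q a ≤ Q b := hFmono.le_iff_le.mp (by rw [hQa, hQb]; exact hab)
  have hsub : ∀ u ∈ Set.Icc a b, u ∈ Set.Ioo (0:ℝ) 1 :=
    fun u hu => ⟨lt_of_lt_of_le ha.1 hu.1, lt_of_le_of_lt hu.2 hb.2⟩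
  have hQmono : MonotoneOn Q (Set.Icc a b) := by
    intro u hu v hv huv
    exact hFmono.le_iff_le.mp (by rw [hFQ u (hsub u hu), hFQ v (hsub v hv)]; exact huv)
  have hQint : IntervalIntegrable Q MeasureTheory.volume a b := by
    apply MonotoneOn.intervalIntegrable
    rwa [Set.uIcc_of_le hab]
  -- Fubini on the indicator of {(y,u) | u < F y}
  have hS : MeasurableSet {p : ℝ × ℝ | p.2 < F p.1} :=
    (isOpen_lt continuous_snd (hFcont.comp continuous_fst)).measurableSet
  set μ1 := MeasureTheory.volume.restrict (Set.Ioc (Q a) (Q b)) with hμ1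
  set μ2 := MeasureTheory.volume.restrict (Set.Ioc a b) with hμ2
  haveI : IsFiniteMeasure μ1 := by
    constructor
    rw [hμ1, Measure.restrict_apply_univ, Real.volume_Ioc]
    exact ENNReal.ofReal_lt_top
  haveI : IsFiniteMeasure μ2 := by
    constructor
    rw [hμ2, Measure.restrict_apply_univ, Real.volume_Ioc]
    exact ENNReal.ofReal_lt_top
  have hmeas : Measurable fun p : ℝ × ℝ => if p.2 < F p.1 then (1:ℝ) else 0 :=
    Measurable.ite hS measurable_const measurable_const
  have hint : Integrable (fun p : ℝ × ℝ => if p.2 < F p.1 then (1:ℝ) else 0) (μ1.prod μ2) := by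
    refine (integrable_const (1:ℝ)).mono' hmeas.aestronglyMeasurable ?_
    filter_upwards with p
    split <;> simp
  have swap := MeasureTheory.integral_integral_swap
    (f := fun y u => if u < F y then (1:ℝ) else 0) hint
  have inner1 : ∀ y, a ≤ F y → F y ≤ b →
      ∫ u in Set.Ioc a b, (if u < F y then (1:ℝ) else 0) = F y - a := by
    intro y h1 h2
    have heq : (fun u => if u < F y then (1:ℝ) else 0)
        = Set.indicator (Set.Iio (F y)) (fun _ => (1:ℝ)) := by
      funext u; simp [Set.indicator_apply, Set.mem_Iio]
    rw [heq, MeasureTheory.setIntegral_indicator measurableSet_Iio]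
    have hset : Set.Ioc a b ∩ Set.Iio (F y) = Set.Ioo a (F y) := by
      ext u
      simp only [Set.mem_inter_iff, Set.mem_Ioc, Set.mem_Iio, Set.mem_Ioo]
      constructor
      · rintro ⟨⟨h, _⟩, h'⟩; exact ⟨h, h'⟩
      · rintro ⟨h, h'⟩; exact ⟨⟨h, h'.le.trans h2⟩, h'⟩
    rw [hset, MeasureTheory.setIntegral_const]
    simp [Real.volume_Ioo, ENNReal.toReal_ofReal (sub_nonneg.mpr h1), h1]
  have inner2 : ∀ u, a ≤ u → u ≤ b →
      ∫ y in Set.Ioc (Q a) (Q b), (if u < F y then (1:ℝ) else 0) = Q b - Q u := by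
    intro u h1 h2
    have hu : u ∈ Set.Ioo (0:ℝ) 1 := hsub u ⟨h1, h2⟩
    have hiff : ∀ y, (u < F y ↔ Q u < y) := by
      intro y
      conv_lhs => rw [← hFQ u hu]
      exact hFmono.lt_iff_lt
    have hQ1 : Q a ≤ Q u := hQmono ⟨le_rfl, hab⟩ ⟨h1, h2⟩ h1
    have hQ2 : Q u ≤ Q b := hQmono ⟨h1, h2⟩ ⟨hab, le_rfl⟩ h2
    have heq : (fun y => if u < F y then (1:ℝ) else 0)
        = Set.indicator (Set.Ioi (Q u)) (fun _ => (1:ℝ)) := by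
      funext y; simp [Set.indicator_apply, Set.mem_Ioi, hiff y]
    rw [heq, MeasureTheory.setIntegral_indicator measurableSet_Ioi]
    have hset : Set.Ioc (Q a) (Q b) ∩ Set.Ioi (Q u) = Set.Ioc (Q u) (Q b) := by
      ext y
      simp only [Set.mem_inter_iff, Set.mem_Ioc, Set.mem_Ioi]
      constructor
      · rintro ⟨⟨_, h'⟩, h''⟩; exact ⟨h'', h'⟩
      · rintro ⟨h', h''⟩; exact ⟨⟨lt_of_le_of_lt hQ1 h', h''⟩, h'⟩
    rw [hset, MeasureTheory.setIntegral_const]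
    simp [Real.volume_Ioc, ENNReal.toReal_ofReal (sub_nonneg.mpr hQ2), hQ2]
  have L : ∫ y in Set.Ioc (Q a) (Q b), (F y - a) = ∫ u in Set.Ioc a b, (Q b - Q u) := by
    calc ∫ y in Set.Ioc (Q a) (Q b), (F y - a)
        = ∫ y in Set.Ioc (Q a) (Q b), ∫ u in Set.Ioc a b, (if u < F y then (1:ℝ) else 0) := by
          refine MeasureTheory.setIntegral_congr_fun measurableSet_Ioc fun y hy => ?_
          have h1 : a ≤ F y := by rw [← hQa]; exact (hFmono hy.1).le
          have h2 : F y ≤ b := by rw [← hQb]; exact hFmono.monotone hy.2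
          exact (inner1 y h1 h2).symm
      _ = ∫ u in Set.Ioc a b, ∫ y in Set.Ioc (Q a) (Q b), (if u < F y then (1:ℝ) else 0) := swap
      _ = ∫ u in Set.Ioc a b, (Q b - Q u) := by
          refine MeasureTheory.setIntegral_congr_fun measurableSet_Ioc fun u hu => ?_
          exact inner2 u hu.1.le hu.2
  have LI : ∫ y in Q a..Q b, (F y - a) = ∫ u in a..b, (Q b - Q u) := by
    rw [intervalIntegral.integral_of_le hQab, intervalIntegral.integral_of_le hab]
    exact L
  have e1 : ∫ y in Q a..Q b, (F y - a) = (∫ y in Q a..Q b, F y) - (Q b - Q a) * a := by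
    rw [intervalIntegral.integral_sub (hFcont.intervalIntegrable _ _) intervalIntegrable_const,
      intervalIntegral.integral_const, smul_eq_mul]
  have e2 : ∫ u in a..b, (Q b - Q u) = (b - a) * Q b - ∫ u in a..b, Q u := by
    rw [intervalIntegral.integral_sub intervalIntegrable_const hQint,
      intervalIntegral.integral_const, smul_eq_mul]
  linear_combination -e1 + LI + e2

theorem smoothly_trimmed_E4
    (α γ : ℝ) (hα : 0 < α) (hαγ : α < γ) (hγ : γ ≤ 1/2)
    (J F Q : ℝ → ℝ)
    (hJ : ∀ u : ℝ, J u =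
      if α ≤ u ∧ u < γ then (u - α) / (γ - α)
      else if γ ≤ u ∧ u ≤ 1 - γ then 1
      else if 1 - γ < u ∧ u ≤ 1 - α then (1 - u - α) / (γ - α)
      else 0)
    (hFcont : Continuous F) (hFmono : StrictMono F)
    (hFQ : ∀ p ∈ Set.Ioo (0:ℝ) 1, F (Q p) = p)
    (hQF : ∀ x : ℝ, Q (F x) = x)
    (x : ℝ) (hx : Q (1 - α) < x) :
    ∫ y in Set.Iic x, J (F y) =
      (1 / (γ - α)) * ((γ - α) * Q γ - (∫ u in α..γ, Q u))
        + Q (1 - γ) - Q γ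
        + (1 / (γ - α)) * ((α - γ) * Q (1 - γ) + (∫ u in (1 - γ)..(1 - α), Q u)) := by
  have hγ2 : γ ≤ 1 - γ := by linarith
  have hne : γ - α ≠ 0 := sub_ne_zero.mpr hαγ.ne'
  have hmα : α ∈ Set.Ioo (0:ℝ) 1 := ⟨hα, by linarith⟩
  have hmγ : γ ∈ Set.Ioo (0:ℝ) 1 := ⟨by linarith, by linarith⟩
  have hm1γ : 1 - γ ∈ Set.Ioo (0:ℝ) 1 := ⟨by linarith, by linarith⟩
  have hm1α : 1 - α ∈ Set.Ioo (0:ℝ) 1 := ⟨by linarith, by linarith⟩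
  have E1 := inv_integral_key F Q hFcont hFmono hFQ α γ hmα hmγ hαγ.le
  have E2 := inv_integral_key F Q hFcont hFmono hFQ (1-γ) (1-α) hm1γ hm1α (by linarith)
  have hQle : ∀ p q : ℝ, p ∈ Set.Ioo (0:ℝ) 1 → q ∈ Set.Ioo (0:ℝ) 1 → p ≤ q → Q p ≤ Q q :=
    fun p q hp hq h => hFmono.le_iff_le.mp (by rw [hFQ p hp, hFQ q hq]; exact h)
  have o1 : Q α ≤ Q γ := hQle _ _ hmα hmγ hαγ.le
  have o2 : Q γ ≤ Q (1-γ) := hQle _ _ hmγ hm1γ hγ2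
  have o3 : Q (1-γ) ≤ Q (1-α) := hQle _ _ hm1γ hm1α (by linarith)
  have o4 : Q (1-α) ≤ x := hx.le
  have hFyle : ∀ p ∈ Set.Ioo (0:ℝ) 1, ∀ y : ℝ, y ≤ Q p → F y ≤ p :=
    fun p hp y h => by rw [← hFQ p hp]; exact hFmono.monotone h
  have hFyge : ∀ p ∈ Set.Ioo (0:ℝ) 1, ∀ y : ℝ, Q p ≤ y → p ≤ F y :=
    fun p hp y h => by rw [← hFQ p hp]; exact hFmono.monotone h
  -- pointwise values of J ∘ F on the pieces
  have J0a : ∀ y ∈ Set.Iic (Q α), J (F y) = 0 := by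
    intro y hy
    have h : F y ≤ α := hFyle α hmα y hy
    rw [hJ]
    split_ifs with c1 c2 c3
    · have heq : F y = α := le_antisymm h c1.1
      simp [heq]
    · linarith [c2.1]
    · linarith [c3.1]
    · rfl
  have J1 : ∀ y ∈ Set.Icc (Q α) (Q γ), J (F y) = (F y - α) / (γ - α) := by
    intro y hy
    have h1 : α ≤ F y := hFyge α hmα y hy.1
    have h2 : F y ≤ γ := hFyle γ hmγ y hy.2
    rw [hJ]
    split_ifs with c1 c2 c3
    · rfl
    · have heq : F y = γ := le_antisymm h2 (le_of_not_gt fun hlt => c1 ⟨h1, hlt⟩)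
      rw [heq]
      exact (div_self hne).symm
    · linarith [c3.1]
    · have heq : F y = γ := le_antisymm h2 (le_of_not_gt fun hlt => c1 ⟨h1, hlt⟩)
      exact absurd ⟨heq.ge, heq.le.trans hγ2⟩ c2
  have J2 : ∀ y ∈ Set.Icc (Q γ) (Q (1-γ)), J (F y) = 1 := by
    intro y hy
    have h1 : γ ≤ F y := hFyge γ hmγ y hy.1
    have h2 : F y ≤ 1 - γ := hFyle (1-γ) hm1γ y hy.2
    rw [hJ]
    split_ifs with c1 c2 c3
    · linarith [c1.2]
    · rfl
    · exact absurd ⟨h1, h2⟩ c2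
    · exact absurd ⟨h1, h2⟩ c2
  have J3 : ∀ y ∈ Set.Icc (Q (1-γ)) (Q (1-α)), J (F y) = (1 - F y - α) / (γ - α) := by
    intro y hy
    have h1 : 1 - γ ≤ F y := hFyge (1-γ) hm1γ y hy.1
    have h2 : F y ≤ 1 - α := hFyle (1-α) hm1α y hy.2
    rw [hJ]
    split_ifs with c1 c2 c3
    · linarith [c1.2]
    · have heq : F y = 1 - γ := le_antisymm c2.2 h1
      rw [heq, show 1 - (1 - γ) - α = γ - α by ring]
      exact (div_self hne).symm
    · rfl
    · have heq : F y = 1 - γ := le_antisymm (le_of_not_gt fun hlt => c3 ⟨hlt, h2⟩) h1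
      exact absurd ⟨by rw [heq]; linarith, heq.le⟩ c2
  have J4 : ∀ y ∈ Set.Icc (Q (1-α)) x, J (F y) = 0 := by
    intro y hy
    have h1 : 1 - α ≤ F y := hFyge (1-α) hm1α y hy.1
    rw [hJ]
    split_ifs with c1 c2 c3
    · linarith [c1.2]
    · linarith [c2.2]
    · have heq : F y = 1 - α := le_antisymm c3.2 h1
      rw [heq]
      simp [show 1 - (1 - α) - α = 0 by ring]
    · rfl
  -- integrability of the pieces
  have i1 : IntegrableOn (fun y => J (F y)) (Set.Ioc (Q α) (Q γ)) := by
    refine (((hFcont.sub continuous_const).div_const (γ - α)).integrableOn_Ioc).congr_fun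
      (fun y hy => (J1 y (Set.Ioc_subset_Icc_self hy)).symm) measurableSet_Ioc
  have i2 : IntegrableOn (fun y => J (F y)) (Set.Ioc (Q γ) (Q (1-γ))) := by
    refine ((continuous_const (y := (1:ℝ))).integrableOn_Ioc).congr_fun
      (fun y hy => (J2 y (Set.Ioc_subset_Icc_self hy)).symm) measurableSet_Ioc
  have i3 : IntegrableOn (fun y => J (F y)) (Set.Ioc (Q (1-γ)) (Q (1-α))) := by
    refine ((((continuous_const.sub hFcont).sub continuous_const).div_const
      (γ - α)).integrableOn_Ioc).congr_fun
      (fun y hy => (J3 y (Set.Ioc_subset_Icc_self hy)).symm) measurableSet_Ioc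
  have i4 : IntegrableOn (fun y => J (F y)) (Set.Ioc (Q (1-α)) x) := by
    refine ((continuous_const (y := (0:ℝ))).integrableOn_Ioc).congr_fun
      (fun y hy => (J4 y (Set.Ioc_subset_Icc_self hy)).symm) measurableSet_Ioc
  have ii1 : IntervalIntegrable (fun y => J (F y)) MeasureTheory.volume (Q α) (Q γ) :=
    ⟨i1, by rw [Set.Ioc_eq_empty (not_lt.mpr o1)]; exact integrableOn_empty⟩
  have ii2 : IntervalIntegrable (fun y => J (F y)) MeasureTheory.volume (Q γ) (Q (1-γ)) :=
    ⟨i2, by rw [Set.Ioc_eq_empty (not_lt.mpr o2)]; exact integrableOn_empty⟩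
  have ii3 : IntervalIntegrable (fun y => J (F y)) MeasureTheory.volume (Q (1-γ)) (Q (1-α)) :=
    ⟨i3, by rw [Set.Ioc_eq_empty (not_lt.mpr o3)]; exact integrableOn_empty⟩
  have ii4 : IntervalIntegrable (fun y => J (F y)) MeasureTheory.volume (Q (1-α)) x :=
    ⟨i4, by rw [Set.Ioc_eq_empty (not_lt.mpr o4)]; exact integrableOn_empty⟩
  -- split the integral over Iic x
  have hQax : Q α ≤ x := o1.trans (o2.trans (o3.trans o4))
  have hunion : Set.Iic (Q α) ∪ Set.Ioc (Q α) x = Set.Iic x := Set.Iic_union_Ioc_eq_Iic hQax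
  have iIic : IntegrableOn (fun y => J (F y)) (Set.Iic (Q α)) :=
    (integrableOn_zero).congr_fun (fun y hy => (J0a y hy).symm) measurableSet_Iic
  have hIocx : Set.Ioc (Q α) x = Set.Ioc (Q α) (Q γ) ∪ Set.Ioc (Q γ) (Q (1-γ))
      ∪ Set.Ioc (Q (1-γ)) (Q (1-α)) ∪ Set.Ioc (Q (1-α)) x := by
    rw [Set.Ioc_union_Ioc_eq_Ioc o1 o2, Set.Ioc_union_Ioc_eq_Ioc (o1.trans o2) o3,
      Set.Ioc_union_Ioc_eq_Ioc ((o1.trans o2).trans o3) o4]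
  have iIoc : IntegrableOn (fun y => J (F y)) (Set.Ioc (Q α) x) := by
    rw [hIocx]
    exact ((i1.union i2).union i3).union i4
  have split1 : ∫ y in Set.Iic x, J (F y)
      = (∫ y in Set.Iic (Q α), J (F y)) + ∫ y in Set.Ioc (Q α) x, J (F y) := by
    rw [← hunion]
    exact MeasureTheory.setIntegral_union (Set.Iic_disjoint_Ioc le_rfl) measurableSet_Ioc iIic iIoc
  have z1 : ∫ y in Set.Iic (Q α), J (F y) = 0 := by
    rw [MeasureTheory.setIntegral_congr_fun measurableSet_Iic J0a]
    simp
  have split2 : ∫ y in Set.Ioc (Q α) x, J (F y) = ∫ y in Q α..x, J (F y) :=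
    (intervalIntegral.integral_of_le hQax).symm
  have split3 : ∫ y in Q α..x, J (F y)
      = (∫ y in Q α..Q γ, J (F y)) + (∫ y in Q γ..Q (1-γ), J (F y))
        + (∫ y in Q (1-γ)..Q (1-α), J (F y)) + ∫ y in Q (1-α)..x, J (F y) := by
    rw [intervalIntegral.integral_add_adjacent_intervals ii1 ii2,
      intervalIntegral.integral_add_adjacent_intervals (ii1.trans ii2) ii3,
      intervalIntegral.integral_add_adjacent_intervals ((ii1.trans ii2).trans ii3) ii4]
  -- evaluate the four interval integrals
  have V1 : ∫ y in Q α..Q γ, J (F y)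
      = (1 / (γ - α)) * ((γ - α) * Q γ - ∫ u in α..γ, Q u) := by
    rw [intervalIntegral.integral_congr (g := fun y => (F y - α) / (γ - α))
      (by rw [Set.uIcc_of_le o1]; exact J1)]
    rw [intervalIntegral.integral_div,
      intervalIntegral.integral_sub (hFcont.intervalIntegrable _ _) intervalIntegrable_const,
      intervalIntegral.integral_const, smul_eq_mul, E1]
    field_simp
    ring
  have V2 : ∫ y in Q γ..Q (1-γ), J (F y) = Q (1-γ) - Q γ := by
    rw [intervalIntegral.integral_congr (g := fun _ => (1:ℝ))
      (by rw [Set.uIcc_of_le o2]; exact J2)]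
    rw [intervalIntegral.integral_const, smul_eq_mul, mul_one]
  have V3 : ∫ y in Q (1-γ)..Q (1-α), J (F y)
      = (1 / (γ - α)) * ((α - γ) * Q (1-γ) + ∫ u in (1-γ)..(1-α), Q u) := by
    rw [intervalIntegral.integral_congr (g := fun y => (1 - F y - α) / (γ - α))
      (by rw [Set.uIcc_of_le o3]; exact J3)]
    rw [intervalIntegral.integral_div,
      intervalIntegral.integral_sub (f := fun x => 1 - F x)
        ((continuous_const.sub hFcont).intervalIntegrable _ _) intervalIntegrable_const,
      intervalIntegral.integral_sub intervalIntegrable_const (hFcont.intervalIntegrable _ _),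
      intervalIntegral.integral_const, intervalIntegral.integral_const, smul_eq_mul,
      smul_eq_mul, E2]
    field_simp
    ring
  have V4 : ∫ y in Q (1-α)..x, J (F y) = 0 := by
    rw [intervalIntegral.integral_congr (g := fun _ => (0:ℝ))
      (by rw [Set.uIcc_of_le o4]; exact J4)]
    exact intervalIntegral.integral_zero
  rw [split1, z1, split2, split3, V1, V2, V3, V4]
  ring
end

section
/- The integral ∫_{-∞}^{∞} (1 − F(y))·J(F(y)) dy equals I, where I = (1/(γ−α))·[ (γ + αγ − γ² − α)·Q(γ) − (1+α)·∫_{α}^{γ} Q(u) du + 2·∫_{α}^{γ} u·Q(u) du + (2−α)·∫_{1−γ}^{1−α} Q(u) du + (αγ − γ²)·Q(1−γ) − 2·∫_{1−γ}^{1−α} u·Q(u) du ] + ∫_{γ}^{1−γ} Q(u) du + γ·Q(1−γ) + γ·Q(γ) − Q(γ). -/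
open MeasureTheory intervalIntegral


lemma swap_key {F Q : ℝ → ℝ} (hFcont : Continuous F) (hFmono : StrictMono F)
    (hFQ : ∀ p ∈ Set.Ioo (0:ℝ) 1, F (Q p) = p)
    (w : ℝ → ℝ) (hw : Continuous w)
    {a b : ℝ} (ha : 0 < a) (hab : a ≤ b) (hb : b < 1) :
    ∫ y in Q a..Q b, (∫ u in a..F y, w u) = ∫ u in a..b, w u * (Q b - Q u) := by
  have haI : a ∈ Set.Ioo (0:ℝ) 1 := ⟨ha, lt_of_le_of_lt hab hb⟩
  have hbI : b ∈ Set.Ioo (0:ℝ) 1 := ⟨lt_of_lt_of_le ha hab, hb⟩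
  have hFa : F (Q a) = a := hFQ a haI
  have hFb : F (Q b) = b := hFQ b hbI
  have hQab : Q a ≤ Q b := hFmono.le_iff_le.mp (by rw [hFa, hFb]; exact hab)
  rw [intervalIntegral.integral_of_le hQab, intervalIntegral.integral_of_le hab]
  have step1 : Set.EqOn (fun y => ∫ u in a..F y, w u)
      (fun y => ∫ u in Set.Ioc a b, (if u ≤ F y then w u else 0))
      (Set.Ioc (Q a) (Q b)) := by
    intro y hy
    have h1 : a ≤ F y := by rw [← hFa]; exact hFmono.le_iff_le.mpr hy.1.le
    have h2 : F y ≤ b := by rw [← hFb]; exact hFmono.le_iff_le.mpr hy.2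
    have hfun : (fun u => if u ≤ F y then w u else 0)
        = Set.indicator (Set.Iic (F y)) w := by
      funext u; simp [Set.indicator_apply]
    simp only
    rw [hfun, setIntegral_indicator measurableSet_Iic, Set.Ioc_inter_Iic,
      min_eq_right h2, intervalIntegral.integral_of_le h1]
  rw [setIntegral_congr_fun measurableSet_Ioc step1]
  haveI i1 : IsFiniteMeasure (volume.restrict (Set.Ioc (Q a) (Q b))) :=
    ⟨by rw [Measure.restrict_apply_univ, Real.volume_Ioc]; exact ENNReal.ofReal_lt_top⟩
  haveI i2 : IsFiniteMeasure (volume.restrict (Set.Ioc a b)) :=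
    ⟨by rw [Measure.restrict_apply_univ, Real.volume_Ioc]; exact ENNReal.ofReal_lt_top⟩
  obtain ⟨Cw, hCw⟩ := isCompact_Icc.exists_bound_of_continuousOn
    (hw.continuousOn (s := Set.Icc a b))
  have hC0 : 0 ≤ Cw := le_trans (norm_nonneg _) (hCw a ⟨le_refl a, hab⟩)
  have hmeas : Measurable (Function.uncurry fun (y u : ℝ) => if u ≤ F y then w u else 0) := by
    have hset : MeasurableSet {p : ℝ × ℝ | p.2 ≤ F p.1} :=
      measurableSet_le measurable_snd (hFcont.measurable.comp measurable_fst)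
    exact Measurable.ite hset (hw.measurable.comp measurable_snd) measurable_const
  have hint : Integrable (Function.uncurry fun (y u : ℝ) => if u ≤ F y then w u else 0)
      ((volume.restrict (Set.Ioc (Q a) (Q b))).prod (volume.restrict (Set.Ioc a b))) := by
    refine Integrable.mono' (integrable_const Cw) hmeas.aestronglyMeasurable ?_
    rw [Measure.prod_restrict]
    filter_upwards [ae_restrict_mem (measurableSet_Ioc.prod measurableSet_Ioc)] with p hp
    rcases hp with ⟨_, hp2⟩
    by_cases h : p.2 ≤ F p.1
    · simpa [Function.uncurry, h] using hCw p.2 ⟨hp2.1.le, hp2.2⟩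
    · simp [Function.uncurry, h, hC0]
  rw [integral_integral_swap hint]
  refine setIntegral_congr_fun measurableSet_Ioc fun u hu => ?_
  have huI : u ∈ Set.Ioo (0:ℝ) 1 := ⟨lt_trans ha hu.1, lt_of_le_of_lt hu.2 hb⟩
  have hFu : F (Q u) = u := hFQ u huI
  have hiff : ∀ y : ℝ, (u ≤ F y) ↔ (Q u ≤ y) := by
    intro y; nth_rewrite 1 [← hFu]; exact hFmono.le_iff_le
  have hQau : Q a < Q u := hFmono.lt_iff_lt.mp (by rw [hFa, hFu]; exact hu.1)
  have hQub : Q u ≤ Q b := hFmono.le_iff_le.mp (by rw [hFu, hFb]; exact hu.2)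
  have hfun : (fun y => if u ≤ F y then w u else 0)
      = Set.indicator (Set.Ici (Q u)) (fun _ => w u) := by
    funext y; simp [Set.indicator_apply, hiff y]
  rw [hfun, setIntegral_indicator measurableSet_Ici]
  have hset : Set.Ioc (Q a) (Q b) ∩ Set.Ici (Q u) = Set.Icc (Q u) (Q b) := by
    ext y
    simp only [Set.mem_inter_iff, Set.mem_Ioc, Set.mem_Ici, Set.mem_Icc]
    constructor
    · rintro ⟨⟨_, h2⟩, h3⟩; exact ⟨h3, h2⟩
    · rintro ⟨h1, h2⟩; exact ⟨⟨lt_of_lt_of_le hQau h1, h2⟩, h1⟩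
  rw [hset, setIntegral_const, Real.volume_real_Icc_of_le (by linarith), smul_eq_mul]
  ring

lemma Q_intInt {F Q : ℝ → ℝ} (hFmono : StrictMono F)
    (hFQ : ∀ p ∈ Set.Ioo (0:ℝ) 1, F (Q p) = p)
    {a b : ℝ} (ha : 0 < a) (hab : a ≤ b) (hb : b < 1) :
    IntervalIntegrable Q volume a b := by
  apply MonotoneOn.intervalIntegrable
  rw [Set.uIcc_of_le hab]
  intro x hx y hy hxy
  have hxI : x ∈ Set.Ioo (0:ℝ) 1 := ⟨lt_of_lt_of_le ha hx.1, lt_of_le_of_lt hx.2 hb⟩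
  have hyI : y ∈ Set.Ioo (0:ℝ) 1 := ⟨lt_of_lt_of_le ha hy.1, lt_of_le_of_lt hy.2 hb⟩
  exact hFmono.le_iff_le.mp (by rw [hFQ x hxI, hFQ y hyI]; exact hxy)

lemma S1_eq {F Q : ℝ → ℝ} (hFcont : Continuous F) (hFmono : StrictMono F)
    (hFQ : ∀ p ∈ Set.Ioo (0:ℝ) 1, F (Q p) = p)
    {a b : ℝ} (ha : 0 < a) (hab : a ≤ b) (hb : b < 1) :
    ∫ y in Q a..Q b, F y = b * Q b - a * Q a - ∫ u in a..b, Q u := by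
  have hQint := Q_intInt hFmono hFQ ha hab hb
  have key := swap_key hFcont hFmono hFQ (fun _ => (1:ℝ)) continuous_const ha hab hb
  simp only [intervalIntegral.integral_const, smul_eq_mul, mul_one, one_mul] at key
  rw [intervalIntegral.integral_sub (hFcont.intervalIntegrable _ _) intervalIntegrable_const,
    intervalIntegral.integral_sub intervalIntegrable_const hQint] at key
  simp only [intervalIntegral.integral_const, smul_eq_mul] at key
  linear_combination key

lemma S2_eq {F Q : ℝ → ℝ} (hFcont : Continuous F) (hFmono : StrictMono F)
    (hFQ : ∀ p ∈ Set.Ioo (0:ℝ) 1, F (Q p) = p)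
    {a b : ℝ} (ha : 0 < a) (hab : a ≤ b) (hb : b < 1) :
    ∫ y in Q a..Q b, (F y)^2 = b^2 * Q b - a^2 * Q a - 2 * ∫ u in a..b, u * Q u := by
  have hQint := Q_intInt hFmono hFQ ha hab hb
  have hQuint : IntervalIntegrable (fun u => u * Q u) volume a b :=
    hQint.continuousOn_mul continuous_id.continuousOn
  have key := swap_key hFcont hFmono hFQ (fun u => 2*u) (by continuity) ha hab hb
  have hinner : ∀ y : ℝ, (∫ u in a..F y, 2*u) = (F y)^2 - a^2 := by
    intro y
    rw [intervalIntegral.integral_const_mul, integral_id]; ring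
  simp only [hinner] at key
  have hrhs : ∫ u in a..b, 2*u*(Q b - Q u)
      = 2*Q b*((b^2 - a^2)/2) - 2*∫ u in a..b, u*Q u := by
    have he : Set.EqOn (fun u => 2*u*(Q b - Q u)) (fun u => 2*Q b*u - 2*(u*Q u))
        (Set.uIcc a b) := fun u _ => by ring
    rw [intervalIntegral.integral_congr he,
      intervalIntegral.integral_sub (f := fun x => 2 * Q b * x)
        ((continuous_const.mul continuous_id').intervalIntegrable _ _)
        (hQuint.const_mul 2),
      intervalIntegral.integral_const_mul, integral_id, intervalIntegral.integral_const_mul]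
  rw [hrhs] at key
  rw [intervalIntegral.integral_sub (f := fun y => F y ^ 2) ((hFcont.pow 2).intervalIntegrable _ _)
      intervalIntegrable_const, intervalIntegral.integral_const, smul_eq_mul] at key
  linear_combination key

theorem smoothly_trimmed_I
    (α γ : ℝ) (hα : 0 < α) (hαγ : α < γ) (hγ : γ ≤ 1/2)
    (J F Q : ℝ → ℝ)
    (hJ : ∀ u : ℝ, J u =
      if α ≤ u ∧ u < γ then (u - α) / (γ - α)
      else if γ ≤ u ∧ u ≤ 1 - γ then 1
      else if 1 - γ < u ∧ u ≤ 1 - α then (1 - u - α) / (γ - α)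
      else 0)
    (hFcont : Continuous F) (hFmono : StrictMono F)
    (hFQ : ∀ p ∈ Set.Ioo (0:ℝ) 1, F (Q p) = p)
    (hQF : ∀ x : ℝ, Q (F x) = x) :
    ∫ y : ℝ, (1 - F y) * J (F y) =
      (1 / (γ - α)) * ((γ + α * γ - γ^2 - α) * Q γ
          - (1 + α) * (∫ u in α..γ, Q u)
          + 2 * (∫ u in α..γ, u * Q u)
          + (2 - α) * (∫ u in (1 - γ)..(1 - α), Q u)
          + (α * γ - γ^2) * Q (1 - γ)
          - 2 * (∫ u in (1 - γ)..(1 - α), u * Q u))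
        + (∫ u in γ..(1 - γ), Q u)
        + γ * Q (1 - γ) + γ * Q γ - Q γ := by
  have hne : γ - α ≠ 0 := sub_ne_zero.mpr (ne_of_gt hαγ)
  have hγ1 : γ < 1 := by linarith
  have hαI : α ∈ Set.Ioo (0:ℝ) 1 := ⟨hα, by linarith⟩
  have hγI : γ ∈ Set.Ioo (0:ℝ) 1 := ⟨by linarith, by linarith⟩
  have hγ'I : 1 - γ ∈ Set.Ioo (0:ℝ) 1 := ⟨by linarith, by linarith⟩
  have hα'I : 1 - α ∈ Set.Ioo (0:ℝ) 1 := ⟨by linarith, by linarith⟩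
  have hQle : ∀ p q : ℝ, p ∈ Set.Ioo (0:ℝ) 1 → q ∈ Set.Ioo (0:ℝ) 1 → p ≤ q → Q p ≤ Q q := by
    intro p q hp hq hpq
    exact hFmono.le_iff_le.mp (by rw [hFQ p hp, hFQ q hq]; exact hpq)
  have hAB : Q α ≤ Q γ := hQle _ _ hαI hγI hαγ.le
  have hBC : Q γ ≤ Q (1-γ) := hQle _ _ hγI hγ'I (by linarith)
  have hCD : Q (1-γ) ≤ Q (1-α) := hQle _ _ hγ'I hα'I (by linarith)
  have hAD : Q α ≤ Q (1-α) := le_trans hAB (le_trans hBC hCD)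
  have hFle : ∀ (p : ℝ), p ∈ Set.Ioo (0:ℝ) 1 → ∀ (y : ℝ), y ≤ Q p → F y ≤ p := by
    intro p hp y hy; rw [← hFQ p hp]; exact hFmono.le_iff_le.mpr hy
  have hFge : ∀ (p : ℝ), p ∈ Set.Ioo (0:ℝ) 1 → ∀ (y : ℝ), Q p ≤ y → p ≤ F y := by
    intro p hp y hy; nth_rewrite 1 [← hFQ p hp]; exact hFmono.le_iff_le.mpr hy
  have hFgt : ∀ (p : ℝ), p ∈ Set.Ioo (0:ℝ) 1 → ∀ (y : ℝ), Q p < y → p < F y := by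
    intro p hp y hy; nth_rewrite 1 [← hFQ p hp]; exact hFmono.lt_iff_lt.mpr hy
  have hzero : ∀ y : ℝ, y ∉ Set.Ioc (Q α) (Q (1-α)) → (1 - F y) * J (F y) = 0 := by
    intro y hy
    rw [Set.mem_Ioc, not_and_or, not_lt, not_le] at hy
    rw [hJ]
    rcases hy with hy | hy
    · have hFy : F y ≤ α := hFle α hαI y hy
      split_ifs with h1 h2 h3
      · have hh : F y = α := le_antisymm hFy h1.1
        rw [hh]; simp
      · exfalso; linarith [h2.1]
      · exfalso; linarith [h3.1]
      · ring
    · have hFy : 1 - α < F y := hFgt _ hα'I y hy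
      split_ifs with h1 h2 h3
      · exfalso; linarith [h1.2]
      · exfalso; linarith [h2.2]
      · exfalso; linarith [h3.2]
      · ring
  have hind : (fun y => (1 - F y) * J (F y))
      = Set.indicator (Set.Ioc (Q α) (Q (1-α))) (fun y => (1 - F y) * J (F y)) := by
    funext y
    by_cases hy : y ∈ Set.Ioc (Q α) (Q (1-α))
    · rw [Set.indicator_of_mem hy]
    · rw [Set.indicator_of_notMem hy, hzero y hy]
  rw [hind, MeasureTheory.integral_indicator measurableSet_Ioc,
    ← intervalIntegral.integral_of_le hAD]
  have hE1 : Set.EqOn (fun y => (1 - F y) * J (F y))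
      (fun y => ((1+α) * F y - (F y)^2 - α) * (γ - α)⁻¹) (Set.uIcc (Q α) (Q γ)) := by
    intro y hy
    rw [Set.uIcc_of_le hAB] at hy
    have h1 : α ≤ F y := hFge α hαI y hy.1
    have h2 : F y ≤ γ := hFle γ hγI y hy.2
    simp only
    rw [hJ]
    split_ifs with hb1 hb2 hb3
    · rw [div_eq_mul_inv]; ring
    · have hFy : F y = γ := le_antisymm h2 hb2.1
      rw [hFy]
      field_simp
      ring
    · exfalso; linarith [hb3.1]
    · exfalso; push_neg at hb1 hb2; linarith [hb2 (hb1 h1)]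
  have hE2 : Set.EqOn (fun y => (1 - F y) * J (F y))
      (fun y => 1 - F y) (Set.uIcc (Q γ) (Q (1-γ))) := by
    intro y hy
    rw [Set.uIcc_of_le hBC] at hy
    have h1 : γ ≤ F y := hFge γ hγI y hy.1
    have h2 : F y ≤ 1 - γ := hFle _ hγ'I y hy.2
    simp only
    rw [hJ]
    split_ifs with hb1 hb2
    · exfalso; linarith [hb1.2]
    · ring
    · exact absurd ⟨h1, h2⟩ hb2
    · exact absurd ⟨h1, h2⟩ hb2
  have hE3 : Set.EqOn (fun y => (1 - F y) * J (F y))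
      (fun y => ((F y)^2 - (2-α) * F y + (1-α)) * (γ - α)⁻¹)
      (Set.uIcc (Q (1-γ)) (Q (1-α))) := by
    intro y hy
    rw [Set.uIcc_of_le hCD] at hy
    have h1 : 1 - γ ≤ F y := hFge _ hγ'I y hy.1
    have h2 : F y ≤ 1 - α := hFle _ hα'I y hy.2
    simp only
    rw [hJ]
    split_ifs with hb1 hb2 hb3
    · exfalso; linarith [hb1.2]
    · have hFy : F y = 1 - γ := le_antisymm hb2.2 h1
      rw [hFy]
      field_simp
      ring
    · rw [div_eq_mul_inv]; ring
    · exfalso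
      push_neg at hb2 hb3
      have hgF : γ ≤ F y := by linarith
      linarith [hb3 (hb2 hgF)]
  have hg1c : Continuous fun y => ((1+α) * F y - (F y)^2 - α) * (γ - α)⁻¹ :=
    (((continuous_const.mul hFcont).sub (hFcont.pow 2)).sub continuous_const).mul
      continuous_const
  have hg2c : Continuous fun y => 1 - F y := continuous_const.sub hFcont
  have hg3c : Continuous fun y => ((F y)^2 - (2-α) * F y + (1-α)) * (γ - α)⁻¹ :=
    (((hFcont.pow 2).sub (continuous_const.mul hFcont)).add continuous_const).mul
      continuous_const
  have hIf : ∀ (a b : ℝ) (g : ℝ → ℝ), Continuous g →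
      Set.EqOn (fun y => (1 - F y) * J (F y)) g (Set.uIcc a b) →
      IntervalIntegrable (fun y => (1 - F y) * J (F y)) volume a b := by
    intro a b g hg hEq
    apply (hg.intervalIntegrable a b).congr
    intro y hy
    exact (hEq (Set.uIoc_subset_uIcc hy)).symm
  have hIf1 := hIf _ _ _ hg1c hE1
  have hIf2 := hIf _ _ _ hg2c hE2
  have hIf3 := hIf _ _ _ hg3c hE3
  rw [← intervalIntegral.integral_add_adjacent_intervals hIf1 (hIf2.trans hIf3),
    ← intervalIntegral.integral_add_adjacent_intervals hIf2 hIf3,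
    intervalIntegral.integral_congr hE1, intervalIntegral.integral_congr hE2,
    intervalIntegral.integral_congr hE3]
  have hFint : ∀ a b : ℝ, IntervalIntegrable F volume a b := hFcont.intervalIntegrable
  have hF2int : ∀ a b : ℝ, IntervalIntegrable (fun y => (F y)^2) volume a b :=
    (hFcont.pow 2).intervalIntegrable
  have e1 : ∫ y in Q α..Q γ, ((1+α) * F y - (F y)^2 - α) * (γ - α)⁻¹
      = ((1+α) * (∫ y in Q α..Q γ, F y) - (∫ y in Q α..Q γ, (F y)^2)
          - α * (Q γ - Q α)) * (γ - α)⁻¹ := by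
    rw [intervalIntegral.integral_mul_const,
      intervalIntegral.integral_sub (((hFint _ _).const_mul _).sub (hF2int _ _))
        intervalIntegrable_const,
      intervalIntegral.integral_sub ((hFint _ _).const_mul _) (hF2int _ _),
      intervalIntegral.integral_const_mul, intervalIntegral.integral_const, smul_eq_mul]
    ring
  have e2 : ∫ y in Q γ..Q (1-γ), (1 - F y)
      = (Q (1-γ) - Q γ) - ∫ y in Q γ..Q (1-γ), F y := by
    rw [intervalIntegral.integral_sub intervalIntegrable_const (hFint _ _),
      intervalIntegral.integral_const, smul_eq_mul, mul_one]
  have e3 : ∫ y in Q (1-γ)..Q (1-α), ((F y)^2 - (2-α) * F y + (1-α)) * (γ - α)⁻¹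
      = ((∫ y in Q (1-γ)..Q (1-α), (F y)^2)
          - (2-α) * (∫ y in Q (1-γ)..Q (1-α), F y)
          + (1-α) * (Q (1-α) - Q (1-γ))) * (γ - α)⁻¹ := by
    rw [intervalIntegral.integral_mul_const,
      intervalIntegral.integral_add ((hF2int _ _).sub ((hFint _ _).const_mul _))
        intervalIntegrable_const,
      intervalIntegral.integral_sub (hF2int _ _) ((hFint _ _).const_mul _),
      intervalIntegral.integral_const_mul, intervalIntegral.integral_const, smul_eq_mul]
    ring
  rw [e1, e2, e3,
    S1_eq hFcont hFmono hFQ hα hαγ.le hγ1,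
    S2_eq hFcont hFmono hFQ hα hαγ.le hγ1,
    S1_eq hFcont hFmono hFQ (show (0:ℝ) < γ by linarith) (show γ ≤ 1-γ by linarith)
      (show (1:ℝ)-γ < 1 by linarith),
    S1_eq hFcont hFmono hFQ (show (0:ℝ) < 1-γ by linarith) (show 1-γ ≤ 1-α by linarith)
      (show (1:ℝ)-α < 1 by linarith),
    S2_eq hFcont hFmono hFQ (show (0:ℝ) < 1-γ by linarith) (show 1-γ ≤ 1-α by linarith)
      (show (1:ℝ)-α < 1 by linarith)]
  field_simp
  ring
end

section
/- Let x_1, …, x_k be real numbers, let w_1, …, w_k be nonnegative reals with Σ_i w_i = 1, let μ ∈ ℝ, set W_i = x_i − μ, and let λ ∈ ℝ satisfy 1 + λ·W_i > 0 for every i and Σ_i w_i·W_i/(1 + λ·W_i) = 0. Set p*_i = w_i/(1 + λ·W_i), and let m > 0. Then for every vector (p_1, …, p_k) with p_i > 0, Σ_i p_i = 1 and Σ_i p_i·x_i = μ, one has Π_i (p_i/w_i)^{m·w_i} ≤ Π_i (p*_i/w_i)^{m·w_i}; i.e. p* attains the supremum in the profile empirical likelihood ratio. -/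
theorem el_lagrange_attains_sup
    (k : ℕ) (x w : Fin k → ℝ) (hw : ∀ i, 0 ≤ w i)
    (hwsum : ∑ i, w i = 1)
    (μ : ℝ) (W : Fin k → ℝ) (hW : ∀ i, W i = x i - μ)
    (lam : ℝ) (hpos : ∀ i, 0 < 1 + lam * W i)
    (hroot : ∑ i, w i * W i / (1 + lam * W i) = 0)
    (pstar : Fin k → ℝ) (hpstar : ∀ i, pstar i = w i / (1 + lam * W i))
    (m : ℝ) (hm : 0 < m)
    (p : Fin k → ℝ) (hp : ∀ i, 0 < p i)
    (hpsum : ∑ i, p i = 1) (hpmean : ∑ i, p i * x i = μ) :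
    ∏ i, (p i / w i) ^ (m * w i) ≤ ∏ i, (pstar i / w i) ^ (m * w i) := by
  classical
  set f : Fin k → ℝ := fun i => (p i / w i) ^ (m * w i) with hf
  set g : Fin k → ℝ := fun i => (pstar i / w i) ^ (m * w i) with hg
  have hfpos : ∀ i, 0 < f i := by
    intro i
    rcases (hw i).eq_or_lt with h | h
    · simp [hf, ← h]
    · exact Real.rpow_pos_of_pos (div_pos (hp i) h) _
  have hgpos : ∀ i, 0 < g i := by
    intro i
    rcases (hw i).eq_or_lt with h | h
    · simp [hg, ← h]
    · have : 0 < pstar i / w i := by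
        rw [hpstar]
        exact div_pos (div_pos h (hpos i)) h
      exact Real.rpow_pos_of_pos this _
  have hFpos : 0 < ∏ i, f i := Finset.prod_pos fun i _ => hfpos i
  have hGpos : 0 < ∏ i, g i := Finset.prod_pos fun i _ => hgpos i
  rw [← Real.log_le_log_iff hFpos hGpos,
    Real.log_prod (fun i _ => (hfpos i).ne'),
    Real.log_prod (fun i _ => (hgpos i).ne')]
  -- error terms
  set e : Fin k → ℝ := fun i => p i * (1 + lam * W i) - w i with he
  have hterm : ∀ i, Real.log (f i) ≤ Real.log (g i) + m * e i := by
    intro i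
    rcases (hw i).eq_or_lt with h | h
    · have hf1 : f i = 1 := by simp [hf, ← h]
      have hg1 : g i = 1 := by simp [hg, ← h]
      have : 0 ≤ m * e i := by
        apply mul_nonneg hm.le
        rw [he]
        simp only [← h, sub_zero]
        exact (mul_pos (hp i) (hpos i)).le
      simpa [hf1, hg1] using this
    · have hpw : 0 < p i / w i := div_pos (hp i) h
      have hpsi : 0 < pstar i := by rw [hpstar]; exact div_pos h (hpos i)
      have hpsw : 0 < pstar i / w i := div_pos hpsi h
      have hlf : Real.log (f i) = m * w i * Real.log (p i / w i) :=
        Real.log_rpow hpw _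
      have hlg : Real.log (g i) = m * w i * Real.log (pstar i / w i) :=
        Real.log_rpow hpsw _
      -- log (p i / pstar i) ≤ p i / pstar i - 1
      have hlog : Real.log (p i / pstar i) ≤ p i / pstar i - 1 :=
        Real.log_le_sub_one_of_pos (div_pos (hp i) hpsi)
      have hsplit : Real.log (p i / w i) - Real.log (pstar i / w i)
          = Real.log (p i / pstar i) := by
        rw [Real.log_div (hp i).ne' h.ne', Real.log_div hpsi.ne' h.ne',
          Real.log_div (hp i).ne' hpsi.ne']
        ring
      have hratio : p i / pstar i = p i * (1 + lam * W i) / w i := by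
        rw [hpstar]
        field_simp
      have key : w i * (Real.log (p i / w i) - Real.log (pstar i / w i)) ≤ e i := by
        rw [hsplit]
        calc w i * Real.log (p i / pstar i) ≤ w i * (p i / pstar i - 1) :=
              mul_le_mul_of_nonneg_left hlog (hw i)
          _ = e i := by
              rw [hratio, he]
              field_simp
      have := mul_le_mul_of_nonneg_left key hm.le
      rw [hlf, hlg]
      nlinarith [this]
  calc ∑ i, Real.log (f i) ≤ ∑ i, (Real.log (g i) + m * e i) :=
        Finset.sum_le_sum fun i _ => hterm i
    _ = ∑ i, Real.log (g i) + m * ∑ i, e i := by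
        rw [Finset.sum_add_distrib, Finset.mul_sum]
    _ = ∑ i, Real.log (g i) := by
        have hpW : ∑ i, p i * W i = 0 := by
          have : ∑ i, p i * W i = ∑ i, (p i * x i - μ * p i) := by
            apply Finset.sum_congr rfl
            intro i _
            rw [hW i]; ring
          rw [this, Finset.sum_sub_distrib, ← Finset.mul_sum, hpsum, hpmean]
          ring
        have hesum : ∑ i, e i = 0 := by
          have : ∑ i, e i = ∑ i, (p i + lam * (p i * W i) - w i) := by
            apply Finset.sum_congr rfl
            intro i _
            rw [he]; ring
          rw [this]
          rw [Finset.sum_sub_distrib, Finset.sum_add_distrib, ← Finset.mul_sum,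
            hpsum, hwsum, hpW]
          ring
        rw [hesum]
        ring
end
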